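/- Let ħ > 0, let ψ : ℝ² → ℂ² be continuously differentiable, and define n_s(r) := (1/2)·ψ(r)*σ_s ψ(r) and J_s^k(r) := (ħ/2)·Im( ψ(r)*σ_s ∂^k ψ(r) ). Then at every point r where ψ(r) ≠ 0 (so n₀(r) > 0), for every s = 1,2,3 and k = 1,2, the pure-state closure relation holds: J_s^k(r) = (n_s(r)/n₀(r))·J₀^k(r) − (ħ/2)·Σ_{i,j=1}^{3} η_{sij}·n_i(r)·∂^k( n_j/n₀ )(r). -/

import Mathlib

open Matrix

/-- The Pauli matrices `σ₀, σ₁, σ₂, σ₃` as 2×2 complex matrices. -/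
noncomputable def pauli : Fin 4 → Matrix (Fin 2) (Fin 2) ℂ :=
  ![!![1, 0; 0, 1], !![0, 1; 1, 0], !![0, -Complex.I; Complex.I, 0], !![1, 0; 0, -1]]

/-- The Levi-Civita symbol on three indices (indexed by `Fin 3`):
totally antisymmetric with `leviCivita 0 1 2 = 1`. -/
def leviCivita (i j k : Fin 3) : ℤ :=
  ((j : ℤ) - (i : ℤ)) * ((k : ℤ) - (j : ℤ)) * ((k : ℤ) - (i : ℤ)) / 2

/-- The spinorial densities `n_s(r) := (1/2)·ψ(r)*σ_s ψ(r)` of a pure state. -/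
noncomputable def spinDensity (ψ : EuclideanSpace ℝ (Fin 2) → Fin 2 → ℂ) (s : Fin 4)
    (r : EuclideanSpace ℝ (Fin 2)) : ℝ :=
  ((1 / 2 : ℂ) * (star (ψ r) ⬝ᵥ (pauli s).mulVec (ψ r))).re

/-- The spinorial currents `J_s^k(r) := (ħ/2)·Im(ψ(r)*σ_s ∂^k ψ(r))` of a pure state. -/
noncomputable def spinCurrent (hbar : ℝ) (ψ : EuclideanSpace ℝ (Fin 2) → Fin 2 → ℂ)
    (s : Fin 4) (k : Fin 2) (r : EuclideanSpace ℝ (Fin 2)) : ℝ :=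
  (hbar / 2) * (star (ψ r) ⬝ᵥ (pauli s).mulVec
      (fun i => fderiv ℝ (fun y => ψ y i) r (EuclideanSpace.single k 1))).im

section helpers

variable (ψ : EuclideanSpace ℝ (Fin 2) → Fin 2 → ℂ) (r : EuclideanSpace ℝ (Fin 2))

lemma sd0 : spinDensity ψ 0 r = ((ψ r 0).re*(ψ r 0).re + (ψ r 0).im*(ψ r 0).im
    + (ψ r 1).re*(ψ r 1).re + (ψ r 1).im*(ψ r 1).im)*(1/2) := by
  simp [spinDensity, pauli, Matrix.mulVec, dotProduct, Fin.sum_univ_two,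
    Complex.mul_re, Complex.mul_im, Complex.add_re, Complex.add_im]
  ring

lemma sd1 : spinDensity ψ 1 r = (ψ r 0).re*(ψ r 1).re + (ψ r 0).im*(ψ r 1).im := by
  simp [spinDensity, pauli, Matrix.mulVec, dotProduct, Fin.sum_univ_two,
    Complex.mul_re, Complex.mul_im, Complex.add_re, Complex.add_im]
  ring

lemma sd2 : spinDensity ψ 2 r = (ψ r 0).re*(ψ r 1).im - (ψ r 0).im*(ψ r 1).re := by
  simp [spinDensity, pauli, Matrix.mulVec, dotProduct, Fin.sum_univ_two,
    Complex.mul_re, Complex.mul_im, Complex.add_re, Complex.add_im]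
  ring

lemma sd3 : spinDensity ψ 3 r = ((ψ r 0).re*(ψ r 0).re + (ψ r 0).im*(ψ r 0).im
    - (ψ r 1).re*(ψ r 1).re - (ψ r 1).im*(ψ r 1).im)*(1/2) := by
  simp [spinDensity, pauli, Matrix.mulVec, dotProduct, Fin.sum_univ_two,
    Complex.mul_re, Complex.mul_im, Complex.add_re, Complex.add_im]
  ring

variable (hbar : ℝ) (k : Fin 2)

lemma sc0 : spinCurrent hbar ψ 0 k r = (hbar/2)*(
    (ψ r 0).re*(fderiv ℝ (fun y => ψ y 0) r (EuclideanSpace.single k 1)).im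
    - (ψ r 0).im*(fderiv ℝ (fun y => ψ y 0) r (EuclideanSpace.single k 1)).re
    + (ψ r 1).re*(fderiv ℝ (fun y => ψ y 1) r (EuclideanSpace.single k 1)).im
    - (ψ r 1).im*(fderiv ℝ (fun y => ψ y 1) r (EuclideanSpace.single k 1)).re) := by
  simp [spinCurrent, pauli, Matrix.mulVec, dotProduct, Fin.sum_univ_two,
    Complex.mul_re, Complex.mul_im, Complex.add_re, Complex.add_im]
  ring_nf
  tauto

lemma sc1 : spinCurrent hbar ψ 1 k r = (hbar/2)*(
    (ψ r 0).re*(fderiv ℝ (fun y => ψ y 1) r (EuclideanSpace.single k 1)).im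
    - (ψ r 0).im*(fderiv ℝ (fun y => ψ y 1) r (EuclideanSpace.single k 1)).re
    + (ψ r 1).re*(fderiv ℝ (fun y => ψ y 0) r (EuclideanSpace.single k 1)).im
    - (ψ r 1).im*(fderiv ℝ (fun y => ψ y 0) r (EuclideanSpace.single k 1)).re) := by
  simp [spinCurrent, pauli, Matrix.mulVec, dotProduct, Fin.sum_univ_two,
    Complex.mul_re, Complex.mul_im, Complex.add_re, Complex.add_im]
  ring_nf
  tauto

lemma sc2 : spinCurrent hbar ψ 2 k r = (hbar/2)*(
    - (ψ r 0).re*(fderiv ℝ (fun y => ψ y 1) r (EuclideanSpace.single k 1)).re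
    - (ψ r 0).im*(fderiv ℝ (fun y => ψ y 1) r (EuclideanSpace.single k 1)).im
    + (ψ r 1).re*(fderiv ℝ (fun y => ψ y 0) r (EuclideanSpace.single k 1)).re
    + (ψ r 1).im*(fderiv ℝ (fun y => ψ y 0) r (EuclideanSpace.single k 1)).im) := by
  simp [spinCurrent, pauli, Matrix.mulVec, dotProduct, Fin.sum_univ_two,
    Complex.mul_re, Complex.mul_im, Complex.add_re, Complex.add_im]
  ring_nf
  tauto

lemma sc3 : spinCurrent hbar ψ 3 k r = (hbar/2)*(
    (ψ r 0).re*(fderiv ℝ (fun y => ψ y 0) r (EuclideanSpace.single k 1)).im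
    - (ψ r 0).im*(fderiv ℝ (fun y => ψ y 0) r (EuclideanSpace.single k 1)).re
    - (ψ r 1).re*(fderiv ℝ (fun y => ψ y 1) r (EuclideanSpace.single k 1)).im
    + (ψ r 1).im*(fderiv ℝ (fun y => ψ y 1) r (EuclideanSpace.single k 1)).re) := by
  simp [spinCurrent, pauli, Matrix.mulVec, dotProduct, Fin.sum_univ_two,
    Complex.mul_re, Complex.mul_im, Complex.add_re, Complex.add_im]
  ring_nf
  tauto

end helpers

lemma lc000 : ((leviCivita 0 0 0 : ℤ) : ℝ) = 0 := by norm_num [leviCivita]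
lemma lc001 : ((leviCivita 0 0 1 : ℤ) : ℝ) = 0 := by norm_num [leviCivita]
lemma lc002 : ((leviCivita 0 0 2 : ℤ) : ℝ) = 0 := by norm_num [leviCivita]
lemma lc010 : ((leviCivita 0 1 0 : ℤ) : ℝ) = 0 := by norm_num [leviCivita]
lemma lc011 : ((leviCivita 0 1 1 : ℤ) : ℝ) = 0 := by norm_num [leviCivita]
lemma lc012 : ((leviCivita 0 1 2 : ℤ) : ℝ) = 1 := by norm_num [leviCivita]
lemma lc020 : ((leviCivita 0 2 0 : ℤ) : ℝ) = 0 := by norm_num [leviCivita]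
lemma lc021 : ((leviCivita 0 2 1 : ℤ) : ℝ) = -1 := by norm_num [leviCivita]
lemma lc022 : ((leviCivita 0 2 2 : ℤ) : ℝ) = 0 := by norm_num [leviCivita]
lemma lc100 : ((leviCivita 1 0 0 : ℤ) : ℝ) = 0 := by norm_num [leviCivita]
lemma lc101 : ((leviCivita 1 0 1 : ℤ) : ℝ) = 0 := by norm_num [leviCivita]
lemma lc102 : ((leviCivita 1 0 2 : ℤ) : ℝ) = -1 := by norm_num [leviCivita]
lemma lc110 : ((leviCivita 1 1 0 : ℤ) : ℝ) = 0 := by norm_num [leviCivita]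
lemma lc111 : ((leviCivita 1 1 1 : ℤ) : ℝ) = 0 := by norm_num [leviCivita]
lemma lc112 : ((leviCivita 1 1 2 : ℤ) : ℝ) = 0 := by norm_num [leviCivita]
lemma lc120 : ((leviCivita 1 2 0 : ℤ) : ℝ) = 1 := by norm_num [leviCivita]
lemma lc121 : ((leviCivita 1 2 1 : ℤ) : ℝ) = 0 := by norm_num [leviCivita]
lemma lc122 : ((leviCivita 1 2 2 : ℤ) : ℝ) = 0 := by norm_num [leviCivita]
lemma lc200 : ((leviCivita 2 0 0 : ℤ) : ℝ) = 0 := by norm_num [leviCivita]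
lemma lc201 : ((leviCivita 2 0 1 : ℤ) : ℝ) = 1 := by norm_num [leviCivita]
lemma lc202 : ((leviCivita 2 0 2 : ℤ) : ℝ) = 0 := by norm_num [leviCivita]
lemma lc210 : ((leviCivita 2 1 0 : ℤ) : ℝ) = -1 := by norm_num [leviCivita]
lemma lc211 : ((leviCivita 2 1 1 : ℤ) : ℝ) = 0 := by norm_num [leviCivita]
lemma lc212 : ((leviCivita 2 1 2 : ℤ) : ℝ) = 0 := by norm_num [leviCivita]
lemma lc220 : ((leviCivita 2 2 0 : ℤ) : ℝ) = 0 := by norm_num [leviCivita]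
lemma lc221 : ((leviCivita 2 2 1 : ℤ) : ℝ) = 0 := by norm_num [leviCivita]
lemma lc222 : ((leviCivita 2 2 2 : ℤ) : ℝ) = 0 := by norm_num [leviCivita]

set_option maxHeartbeats 4000000 in
open ContinuousLinearMap in
/-- For a continuously differentiable pure state `ψ : ℝ² → ℂ²`, at every point where
`ψ(r) ≠ 0` (so `n₀(r) > 0`), for every `s = 1,2,3` and `k = 1,2`, the pure-state closure
relation holds:
`J_s^k(r) = (n_s(r)/n₀(r))·J₀^k(r) − (ħ/2)·Σ_{i,j=1}^{3} η_{sij}·n_i(r)·∂^k(n_j/n₀)(r)`. -/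
theorem pure_state_closure_relation (hbar : ℝ) (hbar_pos : 0 < hbar)
    (ψ : EuclideanSpace ℝ (Fin 2) → Fin 2 → ℂ) (hψ : ContDiff ℝ 1 ψ) :
    ∀ r : EuclideanSpace ℝ (Fin 2), ψ r ≠ 0 →
      ∀ (s : Fin 3) (k : Fin 2),
        spinCurrent hbar ψ s.succ k r
          = (spinDensity ψ s.succ r / spinDensity ψ 0 r) * spinCurrent hbar ψ 0 k r
            - (hbar / 2) * ∑ i : Fin 3, ∑ j : Fin 3,
                (leviCivita s i j : ℝ) * spinDensity ψ i.succ r *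
                  fderiv ℝ (fun y => spinDensity ψ j.succ y / spinDensity ψ 0 y) r
                    (EuclideanSpace.single k 1) := by
  intro r hr s k
  -- differentiability infrastructure
  have hψd : HasFDerivAt ψ (fderiv ℝ ψ r) r := (hψ.differentiable one_ne_zero r).hasFDerivAt
  have h0 : HasFDerivAt (fun y => ψ y 0)
      ((proj 0 : (Fin 2 → ℂ) →L[ℝ] ℂ).comp (fderiv ℝ ψ r)) r :=
    (proj 0 : (Fin 2 → ℂ) →L[ℝ] ℂ).hasFDerivAt.comp r hψd
  have h1 : HasFDerivAt (fun y => ψ y 1)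
      ((proj 1 : (Fin 2 → ℂ) →L[ℝ] ℂ).comp (fderiv ℝ ψ r)) r :=
    (proj 1 : (Fin 2 → ℂ) →L[ℝ] ℂ).hasFDerivAt.comp r hψd
  have hp0 : HasFDerivAt (fun y => (ψ y 0).re)
      (Complex.reCLM.comp ((proj 0 : (Fin 2 → ℂ) →L[ℝ] ℂ).comp (fderiv ℝ ψ r))) r :=
    Complex.reCLM.hasFDerivAt.comp r h0
  have hq0 : HasFDerivAt (fun y => (ψ y 0).im)
      (Complex.imCLM.comp ((proj 0 : (Fin 2 → ℂ) →L[ℝ] ℂ).comp (fderiv ℝ ψ r))) r :=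
    Complex.imCLM.hasFDerivAt.comp r h0
  have hp1 : HasFDerivAt (fun y => (ψ y 1).re)
      (Complex.reCLM.comp ((proj 1 : (Fin 2 → ℂ) →L[ℝ] ℂ).comp (fderiv ℝ ψ r))) r :=
    Complex.reCLM.hasFDerivAt.comp r h1
  have hq1 : HasFDerivAt (fun y => (ψ y 1).im)
      (Complex.imCLM.comp ((proj 1 : (Fin 2 → ℂ) →L[ℝ] ℂ).comp (fderiv ℝ ψ r))) r :=
    Complex.imCLM.hasFDerivAt.comp r h1
  -- positivity of the density
  have h01 : ψ r 0 ≠ 0 ∨ ψ r 1 ≠ 0 := by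
    by_contra h
    push_neg at h
    exact hr (funext fun i => by fin_cases i <;> simp [h.1, h.2])
  have hpos : 0 < (ψ r 0).re*(ψ r 0).re + (ψ r 0).im*(ψ r 0).im
      + (ψ r 1).re*(ψ r 1).re + (ψ r 1).im*(ψ r 1).im := by
    rcases h01 with h | h
    · have h2 := Complex.normSq_pos.mpr h
      rw [Complex.normSq_apply] at h2
      nlinarith [mul_self_nonneg (ψ r 1).re, mul_self_nonneg (ψ r 1).im]
    · have h2 := Complex.normSq_pos.mpr h
      rw [Complex.normSq_apply] at h2
      nlinarith [mul_self_nonneg (ψ r 0).re, mul_self_nonneg (ψ r 0).im]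
  have hne : (((ψ r 0).re*(ψ r 0).re + (ψ r 0).im*(ψ r 0).im
      + (ψ r 1).re*(ψ r 1).re + (ψ r 1).im*(ψ r 1).im)*(1/2)) ≠ 0 :=
    ne_of_gt (by nlinarith)
  -- derivatives of the densities
  have hn0 : HasFDerivAt (fun y => ((ψ y 0).re*(ψ y 0).re + (ψ y 0).im*(ψ y 0).im
      + (ψ y 1).re*(ψ y 1).re + (ψ y 1).im*(ψ y 1).im)*(1/2)) _ r :=
    ((((hp0.mul hp0).add (hq0.mul hq0)).add (hp1.mul hp1)).add (hq1.mul hq1)).mul_const (1/2)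
  have hinv : HasFDerivAt (fun y => (((ψ y 0).re*(ψ y 0).re + (ψ y 0).im*(ψ y 0).im
      + (ψ y 1).re*(ψ y 1).re + (ψ y 1).im*(ψ y 1).im)*(1/2))⁻¹) _ r :=
    (hasFDerivAt_inv' hne).comp r hn0
  have hn1 : HasFDerivAt (fun y => (ψ y 0).re*(ψ y 1).re + (ψ y 0).im*(ψ y 1).im) _ r :=
    (hp0.mul hp1).add (hq0.mul hq1)
  have hn2 : HasFDerivAt (fun y => (ψ y 0).re*(ψ y 1).im - (ψ y 0).im*(ψ y 1).re) _ r :=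
    (hp0.mul hq1).sub (hq0.mul hp1)
  have hn3 : HasFDerivAt (fun y => ((ψ y 0).re*(ψ y 0).re + (ψ y 0).im*(ψ y 0).im
      - (ψ y 1).re*(ψ y 1).re - (ψ y 1).im*(ψ y 1).im)*(1/2)) _ r :=
    ((((hp0.mul hp0).add (hq0.mul hq0)).sub (hp1.mul hp1)).sub (hq1.mul hq1)).mul_const (1/2)
  have e1 : (fun y => spinDensity ψ 1 y / spinDensity ψ 0 y)
      = (fun y => ((ψ y 0).re*(ψ y 1).re + (ψ y 0).im*(ψ y 1).im)
        * ((((ψ y 0).re*(ψ y 0).re + (ψ y 0).im*(ψ y 0).im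
        + (ψ y 1).re*(ψ y 1).re + (ψ y 1).im*(ψ y 1).im)*(1/2))⁻¹)) :=
    funext fun y => by rw [sd1, sd0, div_eq_mul_inv]
  have e2 : (fun y => spinDensity ψ 2 y / spinDensity ψ 0 y)
      = (fun y => ((ψ y 0).re*(ψ y 1).im - (ψ y 0).im*(ψ y 1).re)
        * ((((ψ y 0).re*(ψ y 0).re + (ψ y 0).im*(ψ y 0).im
        + (ψ y 1).re*(ψ y 1).re + (ψ y 1).im*(ψ y 1).im)*(1/2))⁻¹)) :=
    funext fun y => by rw [sd2, sd0, div_eq_mul_inv]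
  have e3 : (fun y => spinDensity ψ 3 y / spinDensity ψ 0 y)
      = (fun y => (((ψ y 0).re*(ψ y 0).re + (ψ y 0).im*(ψ y 0).im
        - (ψ y 1).re*(ψ y 1).re - (ψ y 1).im*(ψ y 1).im)*(1/2))
        * ((((ψ y 0).re*(ψ y 0).re + (ψ y 0).im*(ψ y 0).im
        + (ψ y 1).re*(ψ y 1).re + (ψ y 1).im*(ψ y 1).im)*(1/2))⁻¹)) :=
    funext fun y => by rw [sd3, sd0, div_eq_mul_inv]
  -- the three fderiv computations
  have key1 : fderiv ℝ (fun y => spinDensity ψ 1 y / spinDensity ψ 0 y) r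
      (EuclideanSpace.single k 1)
      = (((fderiv ℝ ψ r (EuclideanSpace.single k 1) 0).re*(ψ r 1).re
        + (ψ r 0).re*(fderiv ℝ ψ r (EuclideanSpace.single k 1) 1).re
        + (fderiv ℝ ψ r (EuclideanSpace.single k 1) 0).im*(ψ r 1).im
        + (ψ r 0).im*(fderiv ℝ ψ r (EuclideanSpace.single k 1) 1).im)
        * (((ψ r 0).re*(ψ r 0).re + (ψ r 0).im*(ψ r 0).im
        + (ψ r 1).re*(ψ r 1).re + (ψ r 1).im*(ψ r 1).im)*(1/2))
      - ((ψ r 0).re*(ψ r 1).re + (ψ r 0).im*(ψ r 1).im) *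
        ((ψ r 0).re*(fderiv ℝ ψ r (EuclideanSpace.single k 1) 0).re
        + (ψ r 0).im*(fderiv ℝ ψ r (EuclideanSpace.single k 1) 0).im
        + (ψ r 1).re*(fderiv ℝ ψ r (EuclideanSpace.single k 1) 1).re
        + (ψ r 1).im*(fderiv ℝ ψ r (EuclideanSpace.single k 1) 1).im))
      / ((((ψ r 0).re*(ψ r 0).re + (ψ r 0).im*(ψ r 0).im
        + (ψ r 1).re*(ψ r 1).re + (ψ r 1).im*(ψ r 1).im)*(1/2))^2) := by
    rw [e1]
    erw [(hn1.mul hinv).fderiv]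
    simp only [ContinuousLinearMap.add_apply, ContinuousLinearMap.smul_apply,
      ContinuousLinearMap.comp_apply, ContinuousLinearMap.coe_comp',
      Function.comp_apply, ContinuousLinearMap.neg_apply,
      ContinuousLinearMap.mulLeftRight_apply, ContinuousLinearMap.proj_apply,
      Complex.reCLM_apply, Complex.imCLM_apply, smul_eq_mul,
      ContinuousLinearMap.mul_apply']
    set A0 := (ψ r 0).re
    set B0 := (ψ r 0).im
    set A1 := (ψ r 1).re
    set B1 := (ψ r 1).im
    set U0 := (fderiv ℝ ψ r (EuclideanSpace.single k 1) 0).re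
    set V0 := (fderiv ℝ ψ r (EuclideanSpace.single k 1) 0).im
    set U1 := (fderiv ℝ ψ r (EuclideanSpace.single k 1) 1).re
    set V1 := (fderiv ℝ ψ r (EuclideanSpace.single k 1) 1).im
    set N : ℝ := (A0*A0 + B0*B0 + A1*A1 + B1*B1)*(1/2) with hN
    field_simp
    ring
  have key2 : fderiv ℝ (fun y => spinDensity ψ 2 y / spinDensity ψ 0 y) r
      (EuclideanSpace.single k 1)
      = (((fderiv ℝ ψ r (EuclideanSpace.single k 1) 0).re*(ψ r 1).im
        + (ψ r 0).re*(fderiv ℝ ψ r (EuclideanSpace.single k 1) 1).im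
        - (fderiv ℝ ψ r (EuclideanSpace.single k 1) 0).im*(ψ r 1).re
        - (ψ r 0).im*(fderiv ℝ ψ r (EuclideanSpace.single k 1) 1).re)
        * (((ψ r 0).re*(ψ r 0).re + (ψ r 0).im*(ψ r 0).im
        + (ψ r 1).re*(ψ r 1).re + (ψ r 1).im*(ψ r 1).im)*(1/2))
      - ((ψ r 0).re*(ψ r 1).im - (ψ r 0).im*(ψ r 1).re) *
        ((ψ r 0).re*(fderiv ℝ ψ r (EuclideanSpace.single k 1) 0).re
        + (ψ r 0).im*(fderiv ℝ ψ r (EuclideanSpace.single k 1) 0).im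
        + (ψ r 1).re*(fderiv ℝ ψ r (EuclideanSpace.single k 1) 1).re
        + (ψ r 1).im*(fderiv ℝ ψ r (EuclideanSpace.single k 1) 1).im))
      / ((((ψ r 0).re*(ψ r 0).re + (ψ r 0).im*(ψ r 0).im
        + (ψ r 1).re*(ψ r 1).re + (ψ r 1).im*(ψ r 1).im)*(1/2))^2) := by
    rw [e2]
    erw [(hn2.mul hinv).fderiv]
    simp only [ContinuousLinearMap.add_apply, ContinuousLinearMap.sub_apply,
      ContinuousLinearMap.smul_apply,
      ContinuousLinearMap.comp_apply, ContinuousLinearMap.coe_comp',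
      Function.comp_apply, ContinuousLinearMap.neg_apply,
      ContinuousLinearMap.mulLeftRight_apply, ContinuousLinearMap.proj_apply,
      Complex.reCLM_apply, Complex.imCLM_apply, smul_eq_mul,
      ContinuousLinearMap.mul_apply']
    set A0 := (ψ r 0).re
    set B0 := (ψ r 0).im
    set A1 := (ψ r 1).re
    set B1 := (ψ r 1).im
    set U0 := (fderiv ℝ ψ r (EuclideanSpace.single k 1) 0).re
    set V0 := (fderiv ℝ ψ r (EuclideanSpace.single k 1) 0).im
    set U1 := (fderiv ℝ ψ r (EuclideanSpace.single k 1) 1).re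
    set V1 := (fderiv ℝ ψ r (EuclideanSpace.single k 1) 1).im
    set N : ℝ := (A0*A0 + B0*B0 + A1*A1 + B1*B1)*(1/2) with hN
    field_simp
    ring
  have key3 : fderiv ℝ (fun y => spinDensity ψ 3 y / spinDensity ψ 0 y) r
      (EuclideanSpace.single k 1)
      = ((((ψ r 0).re*(fderiv ℝ ψ r (EuclideanSpace.single k 1) 0).re
        + (ψ r 0).im*(fderiv ℝ ψ r (EuclideanSpace.single k 1) 0).im
        - (ψ r 1).re*(fderiv ℝ ψ r (EuclideanSpace.single k 1) 1).re
        - (ψ r 1).im*(fderiv ℝ ψ r (EuclideanSpace.single k 1) 1).im))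
        * (((ψ r 0).re*(ψ r 0).re + (ψ r 0).im*(ψ r 0).im
        + (ψ r 1).re*(ψ r 1).re + (ψ r 1).im*(ψ r 1).im)*(1/2))
      - (((ψ r 0).re*(ψ r 0).re + (ψ r 0).im*(ψ r 0).im
        - (ψ r 1).re*(ψ r 1).re - (ψ r 1).im*(ψ r 1).im)*(1/2)) *
        ((ψ r 0).re*(fderiv ℝ ψ r (EuclideanSpace.single k 1) 0).re
        + (ψ r 0).im*(fderiv ℝ ψ r (EuclideanSpace.single k 1) 0).im
        + (ψ r 1).re*(fderiv ℝ ψ r (EuclideanSpace.single k 1) 1).re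
        + (ψ r 1).im*(fderiv ℝ ψ r (EuclideanSpace.single k 1) 1).im))
      / ((((ψ r 0).re*(ψ r 0).re + (ψ r 0).im*(ψ r 0).im
        + (ψ r 1).re*(ψ r 1).re + (ψ r 1).im*(ψ r 1).im)*(1/2))^2) := by
    rw [e3]
    erw [(hn3.mul hinv).fderiv]
    simp only [ContinuousLinearMap.add_apply, ContinuousLinearMap.sub_apply,
      ContinuousLinearMap.smul_apply,
      ContinuousLinearMap.comp_apply, ContinuousLinearMap.coe_comp',
      Function.comp_apply, ContinuousLinearMap.neg_apply,
      ContinuousLinearMap.mulLeftRight_apply, ContinuousLinearMap.proj_apply,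
      Complex.reCLM_apply, Complex.imCLM_apply, smul_eq_mul,
      ContinuousLinearMap.mul_apply']
    set A0 := (ψ r 0).re
    set B0 := (ψ r 0).im
    set A1 := (ψ r 1).re
    set B1 := (ψ r 1).im
    set U0 := (fderiv ℝ ψ r (EuclideanSpace.single k 1) 0).re
    set V0 := (fderiv ℝ ψ r (EuclideanSpace.single k 1) 0).im
    set U1 := (fderiv ℝ ψ r (EuclideanSpace.single k 1) 1).re
    set V1 := (fderiv ℝ ψ r (EuclideanSpace.single k 1) 1).im
    set N : ℝ := (A0*A0 + B0*B0 + A1*A1 + B1*B1)*(1/2) with hN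
    field_simp
    ring
  -- rewrite the component derivatives appearing in the currents
  have c0 : fderiv ℝ (fun y => ψ y 0) r
      = (proj 0 : (Fin 2 → ℂ) →L[ℝ] ℂ).comp (fderiv ℝ ψ r) := h0.fderiv
  have c1 : fderiv ℝ (fun y => ψ y 1) r
      = (proj 1 : (Fin 2 → ℂ) →L[ℝ] ℂ).comp (fderiv ℝ ψ r) := h1.fderiv
  rcases (show ∀ t : Fin 3, t = 0 ∨ t = 1 ∨ t = 2 by decide) s with hs | hs | hs <;> subst hs <;>
  · simp only [Fin.sum_univ_three, Fin.isValue,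
      show (0 : Fin 3).succ = 1 from rfl, show (1 : Fin 3).succ = 2 from rfl,
      show (2 : Fin 3).succ = 3 from rfl,
      lc000, lc001, lc002, lc010, lc011, lc012, lc020, lc021, lc022,
      lc100, lc101, lc102, lc110, lc111, lc112, lc120, lc121, lc122,
      lc200, lc201, lc202, lc210, lc211, lc212, lc220, lc221, lc222,
      zero_mul, one_mul, neg_mul, mul_zero, add_zero, zero_add, neg_neg]
    simp only [key1, key2, key3]
    simp only [sc0, sc1, sc2, sc3, sd0, sd1, sd2, sd3, c0, c1,
      ContinuousLinearMap.comp_apply, ContinuousLinearMap.proj_apply]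
    set A0 := (ψ r 0).re
    set B0 := (ψ r 0).im
    set A1 := (ψ r 1).re
    set B1 := (ψ r 1).im
    set U0 := (fderiv ℝ ψ r (EuclideanSpace.single k 1) 0).re
    set V0 := (fderiv ℝ ψ r (EuclideanSpace.single k 1) 0).im
    set U1 := (fderiv ℝ ψ r (EuclideanSpace.single k 1) 1).re
    set V1 := (fderiv ℝ ψ r (EuclideanSpace.single k 1) 1).im
    set N : ℝ := (A0*A0 + B0*B0 + A1*A1 + B1*B1)*(1/2) with hN
    field_simp
    ring
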